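/- Every k-tree G with more than k+1 vertices has at least one k-simplicial vertex, the set L of all k-simplicial vertices of G is a nonempty independent set, and G \ L is either a k-tree or isomorphic to K_k. -/

import Mathlib

/-- A `k`-tree, defined via a construction ordering: the first `k+1` vertices form a
clique, and each later vertex's neighbourhood among earlier vertices is a `k`-clique. -/
def IsKTree {V : Type*} [Finite V] (k : ℕ) (G : SimpleGraph V) : Prop :=
  k + 1 ≤ Nat.card V ∧
  ∃ σ : Fin (Nat.card V) ≃ V,
    ∀ i : Fin (Nat.card V),
      (((i : ℕ) ≤ k) →
        {u | G.Adj (σ i) u ∧ ((σ.symm u : Fin (Nat.card V)) : ℕ) < (i : ℕ)} =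
          {u | ((σ.symm u : Fin (Nat.card V)) : ℕ) < (i : ℕ)}) ∧
      (k < (i : ℕ) →
        ({u | G.Adj (σ i) u ∧ ((σ.symm u : Fin (Nat.card V)) : ℕ) < (i : ℕ)}.ncard = k ∧
          G.IsClique {u | G.Adj (σ i) u ∧ ((σ.symm u : Fin (Nat.card V)) : ℕ) < (i : ℕ)}))

/-- A vertex is `k`-simplicial if its neighbourhood is a clique on exactly `k` vertices. -/
def IsKSimplicial {V : Type*} (G : SimpleGraph V) (k : ℕ) (v : V) : Prop :=
  G.IsClique (G.neighborSet v) ∧ (G.neighborSet v).ncard = k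

section Helpers

set_option linter.unusedSectionVars false

variable {V : Type*} [Finite V] {n k : ℕ} {G : SimpleGraph V} {σ : Fin n ≃ V}

/-- The position of a vertex in the construction order. -/
private def KTpos (σ : Fin n ≃ V) (v : V) : ℕ := ((σ.symm v : Fin n) : ℕ)

/-- The back-neighbourhood of the `i`-th vertex. -/
private def KTB (G : SimpleGraph V) (σ : Fin n ≃ V) (i : Fin n) : Set V :=
  {u | G.Adj (σ i) u ∧ KTpos σ u < (i : ℕ)}

/-- The hypothesis on the ordering. -/
private def KTH (G : SimpleGraph V) (σ : Fin n ≃ V) (k : ℕ) : Prop :=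
  ∀ i : Fin n,
    (((i : ℕ) ≤ k) → KTB G σ i = {u | KTpos σ u < (i : ℕ)}) ∧
    (k < (i : ℕ) → ((KTB G σ i).ncard = k ∧ G.IsClique (KTB G σ i)))

private lemma KTpos_sigma (i : Fin n) : KTpos σ (σ i) = (i : ℕ) := by
  simp [KTpos]

private lemma KTpos_inj {u v : V} (h : KTpos σ u = KTpos σ v) : u = v := by
  have : σ.symm u = σ.symm v := Fin.ext h
  simpa using congrArg σ this

private lemma KTpos_lt (u : V) : KTpos σ u < n := (σ.symm u).2

private lemma strictMono_le {m : ℕ} {f : Fin m → ℕ} (hf : StrictMono f) (i : Fin m) :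
    (i : ℕ) ≤ f i := by
  obtain ⟨v, hv⟩ := i
  have : ∀ v : ℕ, ∀ hv : v < m, v ≤ f ⟨v, hv⟩ := by
    intro v
    induction v with
    | zero => intro _; exact Nat.zero_le _
    | succ t ih =>
      intro hv
      have ht : t < m := Nat.lt_of_succ_lt hv
      have h1 := ih ht
      have h2 : f ⟨t, ht⟩ < f ⟨t + 1, hv⟩ := hf (by simp [Fin.lt_def])
      omega
  exact this v hv

private lemma low_adj (H : KTH G σ k) {i : Fin n} (hi : (i : ℕ) ≤ k) {u : V}
    (hu : KTpos σ u < (i : ℕ)) : G.Adj (σ i) u := by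
  have := (H i).1 hi
  have : u ∈ KTB G σ i := by rw [this]; exact hu
  exact this.1

private lemma init_adj (H : KTH G σ k) {i j : Fin n} (hi : (i : ℕ) ≤ k) (hj : (j : ℕ) ≤ k)
    (hne : i ≠ j) : G.Adj (σ i) (σ j) := by
  rcases lt_trichotomy (i : ℕ) (j : ℕ) with hlt | heq | hgt
  · exact (low_adj H hj (by rw [KTpos_sigma]; exact hlt)).symm
  · exact absurd (Fin.ext heq) hne
  · exact low_adj H hi (by rw [KTpos_sigma]; exact hgt)

/-- The initial clique as a set of vertices. -/
private def KTI (σ : Fin n ≃ V) (k : ℕ) : Set V := {u | KTpos σ u ≤ k}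

private lemma KTI_ncard (hkn : k < n) : (KTI σ k).ncard = k + 1 := by
  have himg : KTI σ k = σ '' {q : Fin n | (q : ℕ) ≤ k} := by
    ext u
    constructor
    · intro hu
      exact ⟨σ.symm u, hu, by simp⟩
    · rintro ⟨q, hq, rfl⟩
      simpa [KTI, KTpos_sigma] using hq
  rw [himg, Set.ncard_image_of_injective _ σ.injective]
  rw [← Nat.card_coe_set_eq]
  have e : {q : Fin n | (q : ℕ) ≤ k} ≃ Fin (k + 1) := by
    refine ⟨fun q => ⟨(q : Fin n), Nat.lt_succ_of_le q.2⟩,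
      fun t => ⟨⟨(t : ℕ), lt_of_le_of_lt (Nat.le_of_lt_succ t.2) hkn⟩, Nat.le_of_lt_succ t.2⟩,
      ?_, ?_⟩ <;> intro x <;> simp
  rw [Nat.card_congr e, Nat.card_eq_fintype_card, Fintype.card_fin]

private lemma KTB_subset_nbhd (i : Fin n) : KTB G σ i ⊆ G.neighborSet (σ i) :=
  fun _ hu => hu.1

private lemma nbhd_high (H : KTH G σ k) {i : Fin n} (hi : k < (i : ℕ))
    (hs : IsKSimplicial G k (σ i)) : G.neighborSet (σ i) = KTB G σ i := by
  have h1 := (H i).2 hi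
  exact (Set.eq_of_subset_of_ncard_le (KTB_subset_nbhd i)
    (by rw [hs.2, h1.1]) (Set.toFinite _)).symm

private lemma nbhd_low (H : KTH G σ k) (hkn : k < n) {i : Fin n} (hi : (i : ℕ) ≤ k)
    (hs : IsKSimplicial G k (σ i)) :
    G.neighborSet (σ i) = KTI σ k \ {σ i} := by
  have hsub : KTI σ k \ {σ i} ⊆ G.neighborSet (σ i) := by
    rintro u ⟨hu1, hu2⟩
    obtain ⟨j, rfl⟩ : ∃ j, u = σ j := ⟨σ.symm u, by simp⟩
    have hj : (j : ℕ) ≤ k := by simpa [KTI, KTpos_sigma] using hu1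
    have hne : i ≠ j := by
      intro hij
      exact hu2 (by rw [hij]; rfl)
    exact init_adj H hi hj hne
  have hmem : σ i ∈ KTI σ k := by simp [KTI, KTpos_sigma, hi]
  have hIc : (KTI σ k \ {σ i}).ncard = k := by
    rw [Set.ncard_diff_singleton_of_mem hmem, KTI_ncard hkn]
    omega
  exact (Set.eq_of_subset_of_ncard_le hsub (by rw [hs.2, hIc]) (Set.toFinite _)).symm

/-- a simplicial vertex at a high position has all its neighbours earlier. -/
private lemma S1 (H : KTH G σ k) {v : V} (hs : IsKSimplicial G k v) (hv : k < KTpos σ v)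
    {w : V} (hw : G.Adj v w) : KTpos σ w < KTpos σ v := by
  obtain ⟨i, rfl⟩ : ∃ i, v = σ i := ⟨σ.symm v, by simp⟩
  rw [KTpos_sigma] at hv ⊢
  have hN := nbhd_high H hv hs
  have hwmem : w ∈ KTB G σ i := by rw [← hN]; exact hw
  exact hwmem.2

/-- a simplicial vertex at a low position has all its neighbours in the initial clique. -/
private lemma S2 (H : KTH G σ k) (hkn : k < n) {v : V} (hs : IsKSimplicial G k v)
    (hv : KTpos σ v ≤ k) {w : V} (hw : G.Adj v w) : KTpos σ w ≤ k := by
  obtain ⟨i, rfl⟩ : ∃ i, v = σ i := ⟨σ.symm v, by simp⟩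
  rw [KTpos_sigma] at hv
  have hN := nbhd_low H hkn hv hs
  have hwmem : w ∈ KTI σ k \ {σ i} := by rw [← hN]; exact hw
  exact hwmem.1

private lemma last_simplicial (H : KTH G σ k) (hkn : k + 1 < n) :
    IsKSimplicial G k (σ ⟨n - 1, by omega⟩) := by
  set i : Fin n := ⟨n - 1, by omega⟩ with hi
  have hik : k < (i : ℕ) := by simp only [hi]; omega
  have hB := (H i).2 hik
  have hN : G.neighborSet (σ i) = KTB G σ i := by
    ext w
    constructor
    · intro hw
      refine ⟨hw, ?_⟩
      have h1 : KTpos σ w < n := KTpos_lt w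
      have h2 : KTpos σ w ≠ (i : ℕ) := by
        intro he
        have : w = σ i := KTpos_inj (by rw [he, KTpos_sigma])
        rw [this] at hw
        exact G.irrefl hw
      simp only [hi] at h2 ⊢
      omega
    · intro hw
      exact hw.1
  exact ⟨by rw [hN]; exact hB.2, by rw [hN]; exact hB.1⟩

private lemma KTB_k1 (H : KTH G σ k) (hk : 1 ≤ k) (hkn : k + 1 < n) {u v : V}
    (hpu : KTpos σ u ≤ k) (hpv : KTpos σ v ≤ k) (hne : u ≠ v) :
    u ∈ KTB G σ ⟨k + 1, by omega⟩ ∨ v ∈ KTB G σ ⟨k + 1, by omega⟩ := by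
  set j : Fin n := ⟨k + 1, by omega⟩ with hj
  by_contra hcon
  push_neg at hcon
  have hsub : KTB G σ j ⊆ KTI σ k \ ({u, v} : Set V) := by
    intro b hb
    refine ⟨?_, ?_⟩
    · have h2 : KTpos σ b < k + 1 := by simpa [hj] using hb.2
      exact Nat.le_of_lt_succ h2
    · rintro (rfl | rfl)
      · exact hcon.1 hb
      · exact hcon.2 hb
  have h1 : (KTB G σ j).ncard = k := ((H j).2 (by simp [hj])).1
  have hUV : ({u, v} : Set V) ⊆ KTI σ k := by
    rintro x (rfl | rfl) <;> assumption
  have h2 : (KTI σ k \ ({u, v} : Set V)).ncard = k - 1 := by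
    rw [Set.ncard_diff hUV (Set.toFinite _), KTI_ncard (by omega), Set.ncard_pair hne]
    omega
  have h3 := Set.ncard_le_ncard hsub (Set.toFinite _)
  omega

private lemma init_L_unique (H : KTH G σ k) (hk : 1 ≤ k) (hkn : k + 1 < n) {u v : V}
    (hu : IsKSimplicial G k u) (hv : IsKSimplicial G k v)
    (hpu : KTpos σ u ≤ k) (hpv : KTpos σ v ≤ k) : u = v := by
  by_contra hne
  have hjpos : KTpos σ (σ (⟨k + 1, by omega⟩ : Fin n)) = k + 1 := by
    rw [KTpos_sigma]
  rcases KTB_k1 H hk hkn hpu hpv hne with hmem | hmem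
  · have := S2 H (by omega) hu hpu hmem.1.symm
    omega
  · have := S2 H (by omega) hv hpv hmem.1.symm
    omega

private lemma not_simplicial_of_mem_KTB (H : KTH G σ k) (hkn : k + 1 < n) {i : Fin n}
    (hi : k < (i : ℕ)) {b : V} (hb : b ∈ KTB G σ i) : ¬ IsKSimplicial G k b := by
  intro hs
  have hadj : G.Adj b (σ i) := hb.1.symm
  by_cases hpb : KTpos σ b ≤ k
  · have := S2 H (by omega) hs hpb hadj
    rw [KTpos_sigma] at this
    omega
  · have := S1 H hs (by omega) hadj
    rw [KTpos_sigma] at this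
    have := hb.2
    omega

private lemma indep_aux (H : KTH G σ k) (hk : 1 ≤ k) (hkn : k + 1 < n) {u w : V}
    (hu : IsKSimplicial G k u) (hw : IsKSimplicial G k w) (hadj : G.Adj u w)
    (hlt : KTpos σ u < KTpos σ w) : False := by
  have hne : u ≠ w := G.ne_of_adj hadj
  by_cases hwp : k < KTpos σ w
  · obtain ⟨j, rfl⟩ : ∃ j, w = σ j := ⟨σ.symm w, by simp⟩
    rw [KTpos_sigma] at hwp hlt
    exact not_simplicial_of_mem_KTB H hkn hwp ⟨hadj.symm, hlt⟩ hu
  · have hwp' : KTpos σ w ≤ k := by omega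
    have hup : KTpos σ u ≤ k := by omega
    exact hne (init_L_unique H hk hkn hu hw hup hwp')

private lemma indep (H : KTH G σ k) (hk : 1 ≤ k) (hkn : k + 1 < n) {u w : V}
    (hu : IsKSimplicial G k u) (hw : IsKSimplicial G k w) (hadj : G.Adj u w) : False := by
  rcases Nat.lt_trichotomy (KTpos σ u) (KTpos σ w) with hlt | he | hgt
  · exact indep_aux H hk hkn hu hw hadj hlt
  · exact G.ne_of_adj hadj (KTpos_inj he)
  · exact indep_aux H hk hkn hw hu hadj.symm hgt

private lemma ncard_fin_lt {m : ℕ} (i : Fin m) : {j : Fin m | (j : ℕ) < (i : ℕ)}.ncard = (i : ℕ) := by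
  rw [← Nat.card_coe_set_eq]
  have e : {j : Fin m | (j : ℕ) < (i : ℕ)} ≃ Fin (i : ℕ) := by
    refine ⟨fun j => ⟨(j : Fin m), j.2⟩, fun t => ⟨⟨(t : ℕ), lt_trans t.2 i.2⟩, t.2⟩, ?_, ?_⟩ <;>
      intro x <;> simp
  rw [Nat.card_congr e, Nat.card_eq_fintype_card, Fintype.card_fin]


/-- The induced graph on the non-simplicial vertices is a `k`-tree when it has ≥ k+1 vertices. -/
private lemma ktree_case {G : SimpleGraph V} {σ : Fin (Nat.card V) ≃ V}
    (hn : k + 1 ≤ Nat.card V) (H : KTH G σ k) (hk : 1 ≤ k) (hbig : k + 1 < Nat.card V)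
    (hBR : ∀ i : Fin (Nat.card V), k < (i : ℕ) → KTB G σ i ⊆ {v | IsKSimplicial G k v}ᶜ)
    (hge : k + 1 ≤ ({v | IsKSimplicial G k v}ᶜ : Set V).ncard) :
    IsKTree k (G.induce {v | IsKSimplicial G k v}ᶜ) := by
  classical
  set R : Set V := {v | IsKSimplicial G k v}ᶜ with hRdef
  let s : Finset (Fin (Nat.card V)) := Finset.univ.filter (fun q => σ q ∈ R)
  have hmem_s : ∀ q : Fin (Nat.card V), q ∈ s ↔ σ q ∈ R := by intro q; simp [s]
  have himg : σ '' (↑s : Set (Fin (Nat.card V))) = R := by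
    ext u
    constructor
    · rintro ⟨q, hq, rfl⟩
      exact (hmem_s q).1 hq
    · intro hu
      exact ⟨σ.symm u, (hmem_s _).2 (by simpa using hu), by simp⟩
  have hscard : s.card = Nat.card ↥R := by
    rw [Nat.card_coe_set_eq, ← himg, Set.ncard_image_of_injective _ σ.injective,
      Set.ncard_coe_finset]
  let e := s.orderIsoOfFin hscard
  have hes : ∀ i, ((e i : Fin (Nat.card V))) ∈ s := fun i => (e i).2
  have humem : ∀ u : ↥R, σ.symm (u : V) ∈ s := fun u => (hmem_s _).2 (by simpa using u.2)
  let σ' : Fin (Nat.card ↥R) ≃ ↥R :=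
    { toFun := fun i => ⟨σ (e i), (hmem_s _).1 (hes i)⟩
      invFun := fun u => e.symm ⟨σ.symm (u : V), humem u⟩
      left_inv := by
        intro i
        rw [OrderIso.symm_apply_eq]
        exact Subtype.ext (by simp)
      right_inv := by
        intro u
        apply Subtype.ext
        show σ ((e (e.symm _) : Fin (Nat.card V))) = (u : V)
        rw [OrderIso.apply_symm_apply]
        simp }
  have hsymm' : ∀ u : ↥R, σ'.symm u = e.symm ⟨σ.symm (u : V), humem u⟩ := fun u => rfl
  have hiso_lt : ∀ (a : ↥s) (b : Fin (Nat.card ↥R)), e.symm a < b ↔ a < e b := by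
    intro a b
    rw [← e.lt_iff_lt, e.apply_symm_apply]
  have hkey : ∀ (u : ↥R) (i : Fin (Nat.card ↥R)),
      (((σ'.symm u : Fin (Nat.card ↥R))) : ℕ) < (i : ℕ) ↔
        KTpos σ (u : V) < ((e i : Fin (Nat.card V)) : ℕ) := by
    intro u i
    rw [hsymm', show ((i : ℕ)) = ((i : Fin (Nat.card ↥R)) : ℕ) from rfl, ← Fin.lt_def,
      hiso_lt, ← Subtype.coe_lt_coe, Fin.lt_def]
    rfl
  refine ⟨by rw [Nat.card_coe_set_eq]; exact hge, σ', ?_⟩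
  intro i
  set p : Fin (Nat.card V) := (e i : Fin (Nat.card V)) with hp
  have hile : (i : ℕ) ≤ (p : ℕ) := by
    apply strictMono_le (f := fun j : Fin (Nat.card ↥R) => ((e j : Fin (Nat.card V)) : ℕ))
    intro a b hab
    exact Fin.lt_def.mp (Subtype.coe_lt_coe.mpr (e.strictMono hab))
  have hτ : ((σ' i : ↥R) : V) = σ p := rfl
  have hset : {u : ↥R | (G.induce R).Adj (σ' i) u ∧
        ((σ'.symm u : Fin (Nat.card ↥R)) : ℕ) < (i : ℕ)}
      = {u : ↥R | (u : V) ∈ KTB G σ p} := by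
    ext u
    constructor
    · rintro ⟨ha, hlt⟩
      exact ⟨ha, (hkey u i).mp hlt⟩
    · rintro ⟨ha, hlt⟩
      exact ⟨ha, (hkey u i).mpr hlt⟩
  have hBfact : k < (p : ℕ) → {u : ↥R | (u : V) ∈ KTB G σ p}.ncard = k := by
    intro hpk
    have hval : Subtype.val '' {u : ↥R | (u : V) ∈ KTB G σ p} = KTB G σ p := by
      ext x
      constructor
      · rintro ⟨y, hy, rfl⟩
        exact hy
      · intro hx
        exact ⟨⟨x, hBR p hpk hx⟩, hx, rfl⟩
    rw [← Set.ncard_image_of_injective _ Subtype.val_injective, hval]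
    exact ((H p).2 hpk).1
  constructor
  · intro hik
    by_cases hpk : (p : ℕ) ≤ k
    · rw [hset]
      ext u
      simp only [Set.mem_setOf_eq]
      rw [hkey u i]
      constructor
      · intro hu
        exact hu.2
      · intro hu
        exact ⟨low_adj H hpk hu, hu⟩
    · push_neg at hpk
      have hsubE : {u : ↥R | (u : V) ∈ KTB G σ p} ⊆
          {u : ↥R | ((σ'.symm u : Fin (Nat.card ↥R)) : ℕ) < (i : ℕ)} := by
        intro u hu
        exact (hkey u i).mpr hu.2
      have hE : {u : ↥R | ((σ'.symm u : Fin (Nat.card ↥R)) : ℕ) < (i : ℕ)}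
          = ⇑σ' '' {j : Fin (Nat.card ↥R) | (j : ℕ) < (i : ℕ)} := by
        ext u
        constructor
        · intro hu
          exact ⟨σ'.symm u, hu, σ'.apply_symm_apply u⟩
        · rintro ⟨j, hj, rfl⟩
          show ((σ'.symm (σ' j) : Fin (Nat.card ↥R)) : ℕ) < (i : ℕ)
          rw [Equiv.symm_apply_apply]; exact hj
      have hEcard : {u : ↥R | ((σ'.symm u : Fin (Nat.card ↥R)) : ℕ) < (i : ℕ)}.ncard
          = (i : ℕ) := by
        rw [hE, Set.ncard_image_of_injective _ σ'.injective, ncard_fin_lt]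
      have hki : k ≤ (i : ℕ) := by
        have h1 := Set.ncard_le_ncard hsubE (Set.toFinite _)
        rw [hEcard, hBfact hpk] at h1
        exact h1
      have hBE : {u : ↥R | (u : V) ∈ KTB G σ p}
          = {u : ↥R | ((σ'.symm u : Fin (Nat.card ↥R)) : ℕ) < (i : ℕ)} := by
        apply Set.eq_of_subset_of_ncard_le hsubE _ (Set.toFinite _)
        rw [hEcard, hBfact hpk]
        omega
      rw [hset, hBE]
  · intro hik
    have hpk : k < (p : ℕ) := lt_of_lt_of_le hik hile
    rw [hset]
    refine ⟨hBfact hpk, ?_⟩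
    intro a ha b hb hne
    exact ((H p).2 hpk).2 ha hb (fun hc => hne (Subtype.ext hc))

end Helpers

/-- In a `k`-tree with more than `k+1` vertices, the set `L` of `k`-simplicial vertices
is nonempty and independent, and deleting it leaves a `k`-tree or a copy of `K_k`. -/
theorem ktree_simplicial_set {V : Type*} [Finite V] (k : ℕ) (hk : 1 ≤ k)
    (G : SimpleGraph V) (h : IsKTree k G) (hbig : k + 1 < Nat.card V) :
    {v | IsKSimplicial G k v}.Nonempty ∧
    (∀ u ∈ {v | IsKSimplicial G k v}, ∀ w ∈ {v | IsKSimplicial G k v}, ¬ G.Adj u w) ∧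
    (IsKTree k (G.induce {v | IsKSimplicial G k v}ᶜ) ∨
      Nonempty ((G.induce {v | IsKSimplicial G k v}ᶜ) ≃g (⊤ : SimpleGraph (Fin k)))) := by
  classical
  obtain ⟨hn, σ, Hσ⟩ := h
  have H : KTH G σ k := fun i => ⟨(Hσ i).1, (Hσ i).2⟩
  set L : Set V := {v | IsKSimplicial G k v} with hL
  set R : Set V := Lᶜ with hR
  have hmemR : ∀ u : V, u ∈ R ↔ ¬ IsKSimplicial G k u := by
    intro u; simp [hR, hL]
  refine ⟨⟨_, last_simplicial H hbig⟩, fun u hu w hw hadj => indep H hk hbig hu hw hadj, ?_⟩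
  -- R contains all back-neighbourhoods of high vertices
  have hBR : ∀ i : Fin (Nat.card V), k < (i : ℕ) → KTB G σ i ⊆ R := by
    intro i hi b hb
    exact (hmemR b).2 (not_simplicial_of_mem_KTB H hbig hi hb)
  have hcardR : Nat.card ↥R = R.ncard := Nat.card_coe_set_eq R
  by_cases hIL : ∃ v₀ ∈ KTI σ k, IsKSimplicial G k v₀
  case neg =>
    -- no initial vertex is simplicial : KTI ⊆ R, so R has ≥ k+1 elements
    push_neg at hIL
    have hsub : KTI σ k ⊆ R := fun x hx => (hmemR x).2 (hIL x hx)
    have hge : k + 1 ≤ R.ncard := by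
      rw [← KTI_ncard (σ := σ) (by omega)]
      exact Set.ncard_le_ncard hsub (Set.toFinite _)
    exact Or.inl (ktree_case (by omega) H hk hbig hBR hge)
  case pos =>
    obtain ⟨v₀, hv₀I, hv₀s⟩ := hIL
    have hsub : KTI σ k \ {v₀} ⊆ R := by
      rintro x ⟨hx1, hx2⟩
      refine (hmemR x).2 (fun hxs => hx2 ?_)
      exact init_L_unique H hk hbig hxs hv₀s hx1 hv₀I
    have hge : k ≤ R.ncard := by
      have h1 : (KTI σ k \ {v₀}).ncard = k := by
        rw [Set.ncard_diff_singleton_of_mem hv₀I, KTI_ncard (by omega)]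
        omega
      rw [← h1]
      exact Set.ncard_le_ncard hsub (Set.toFinite _)
    rcases eq_or_lt_of_le hge with heq | hlt
    · -- R is exactly the initial clique minus v₀ : isomorphic to K_k
      refine Or.inr ?_
      have hReq : KTI σ k \ {v₀} = R := by
        apply Set.eq_of_subset_of_ncard_le hsub _ (Set.toFinite _)
        rw [← heq, Set.ncard_diff_singleton_of_mem hv₀I, KTI_ncard (by omega)]
        omega
      have hclq : ∀ a b : V, a ∈ R → b ∈ R → a ≠ b → G.Adj a b := by
        intro a b ha hb hne
        rw [← hReq] at ha hb
        obtain ⟨ia, rfl⟩ : ∃ ia, a = σ ia := ⟨σ.symm a, by simp⟩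
        obtain ⟨ib, rfl⟩ : ∃ ib, b = σ ib := ⟨σ.symm b, by simp⟩
        refine init_adj H ?_ ?_ (fun hc => hne (by rw [hc]))
        · simpa [KTI, KTpos_sigma] using ha.1
        · simpa [KTI, KTpos_sigma] using hb.1
      have hcard : Nat.card ↥R = k := by rw [hcardR, ← heq]
      refine ⟨⟨Finite.equivFinOfCardEq hcard, ?_⟩⟩
      intro a b
      simp only [SimpleGraph.top_adj, SimpleGraph.comap_adj, EmbeddingLike.apply_eq_iff_eq,
        ne_eq]
      constructor
      · intro hne
        exact hclq _ _ a.2 b.2 (fun hc => hne (Subtype.ext hc))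
      · intro hadj hc
        exact G.ne_of_adj hadj (by rw [hc])
    · exact Or.inl (ktree_case (by omega) H hk hbig hBR hlt)
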